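/- Let G₂, G₁, G₀ ∈ ℂ and s ∈ ℝ with (1 + s/2)² - |G₂|² ≠ 0. Define G₂# = -G₂/((1+s/2)² - |G₂|²), G₁# = -((1+s/2)·G₁ + conj(G₁)·G₂)/((1+s/2)² - |G₂|²), and suppose also 1 - |G₂| + s/2 > 0 and 1 + |G₂| + s/2 > 0, and set s# = 1/(1-|G₂|+s/2) + 1/(1+|G₂|+s/2) - 2. Then applying the same formulas to (G₂#, G₁#, s#) recovers (G₂, G₁): that is, -G₂#/((1+s#/2)² - |G₂#|²) = G₂ and -((1+s#/2)·G₁# + conj(G₁#)·G₂#)/((1+s#/2)² - |G₂#|²) = G₁. -/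

import Mathlib

/-- The algebraic relations between the background-frame components `(G₂, G₁, slashed G)`
of a radiation-gauge metric and the components `(G₂^#, G₁^#, slashed G^#)` of its inverse
are mutually inverse: applying them twice recovers `(G₂, G₁)`. -/
theorem stmt16 (G₂ G₁ G₀ : ℂ) (s : ℝ)
    (hden : ((1 + s/2)^2 - Complex.normSq G₂ : ℝ) ≠ 0)
    (h1 : 0 < 1 - ‖G₂‖ + s/2) (h2 : 0 < 1 + ‖G₂‖ + s/2) :
    let d : ℂ := (1 + (s:ℂ)/2)^2 - ((‖G₂‖ : ℝ) : ℂ)^2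
    let G₂s : ℂ := -G₂ / d
    let G₁s : ℂ := -((1 + (s:ℂ)/2) * G₁ + (starRingEnd ℂ) G₁ * G₂) / d
    let ss : ℝ := 1/(1 - ‖G₂‖ + s/2) + 1/(1 + ‖G₂‖ + s/2) - 2
    let ds : ℂ := (1 + (ss:ℂ)/2)^2 - ((‖G₂s‖ : ℝ) : ℂ)^2
    (-G₂s / ds = G₂ ∧
      -((1 + (ss:ℂ)/2) * G₁s + (starRingEnd ℂ) G₁s * G₂s) / ds = G₁) := by
  intro d G₂s G₁s ss ds
  set a : ℝ := 1 + s/2 with ha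
  set b : ℝ := ‖G₂‖ with hb
  have hdR : (0:ℝ) < a^2 - b^2 := by
    have : a^2 - b^2 = (1 - b + s/2) * (1 + b + s/2) := by rw [ha]; ring
    rw [this]; exact mul_pos h1 h2
  have hd : d = ((a^2 - b^2 : ℝ) : ℂ) := by
    show (1 + (s:ℂ)/2)^2 - ((b : ℝ) : ℂ)^2 = _
    push_cast [ha]; ring
  have hdne : ((a^2 - b^2 : ℝ) : ℂ) ≠ 0 := by exact_mod_cast hdR.ne'
  have habs : ‖G₂s‖ = b / (a^2 - b^2) := by
    show ‖-G₂ / d‖ = _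
    rw [hd, norm_div, norm_neg, Complex.norm_real, Real.norm_eq_abs, abs_of_pos hdR, hb]
  have hss : (1 : ℝ) + ss/2 = a / (a^2-b^2) := by
    show 1 + (1/(1 - b + s/2) + 1/(1 + b + s/2) - 2)/2 = _
    have e1 : 1 - b + s/2 = a - b := by rw [ha]; ring
    have e2 : 1 + b + s/2 = a + b := by rw [ha]; ring
    rw [e1, e2]
    have hab : a - b ≠ 0 := by rw [← e1]; exact h1.ne'
    have hab2 : a + b ≠ 0 := by rw [← e2]; exact h2.ne'
    field_simp
    ring
  have hds : ds = ((a^2 - b^2 : ℝ) : ℂ)⁻¹ := by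
    show (1 + (ss:ℂ)/2)^2 - ((‖G₂s‖ : ℝ) : ℂ)^2 = _
    have : (1 + (ss:ℂ)/2) = ((1 + ss/2 : ℝ) : ℂ) := by push_cast; ring
    rw [this, hss, habs, ← Complex.ofReal_pow, ← Complex.ofReal_pow, ← Complex.ofReal_sub,
      ← Complex.ofReal_inv, Complex.ofReal_inj]
    field_simp
  have hcG₂ : (starRingEnd ℂ) G₂ * G₂ = ((b:ℝ):ℂ)^2 := by
    rw [mul_comm, Complex.mul_conj, hb, Complex.normSq_eq_norm_sq]
    push_cast; ring
  have hAc : (1 + (ss:ℂ)/2) = ((a : ℝ) : ℂ) / ((a^2 - b^2 : ℝ) : ℂ) := by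
    have : (1 + (ss:ℂ)/2) = ((1 + ss/2 : ℝ) : ℂ) := by push_cast; ring
    rw [this, hss]; push_cast; ring
  have haC : ((a:ℝ):ℂ) = 1 + (s:ℂ)/2 := by push_cast [ha]; ring
  have hdne' : ((a:ℝ):ℂ)^2 - ((b:ℝ):ℂ)^2 ≠ 0 := by
    rw [← Complex.ofReal_pow, ← Complex.ofReal_pow, ← Complex.ofReal_sub]; exact hdne
  constructor
  · show -(-G₂ / d) / ds = G₂
    rw [hd, hds]
    field_simp [hdne']
  · show -((1 + (ss:ℂ)/2) * G₁s + (starRingEnd ℂ) G₁s * G₂s) / ds = G₁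
    have hG₁s : G₁s = -((1 + (s:ℂ)/2) * G₁ + (starRingEnd ℂ) G₁ * G₂) / ((a^2-b^2:ℝ):ℂ) := by
      show -((1 + (s:ℂ)/2) * G₁ + (starRingEnd ℂ) G₁ * G₂) / d = _
      rw [hd]
    have hG₂s : G₂s = -G₂ / ((a^2-b^2:ℝ):ℂ) := by
      show -G₂ / d = _; rw [hd]
    rw [hG₁s, hG₂s, hds, hAc, ← haC]
    rw [map_div₀, map_neg]
    simp only [map_add, map_mul, Complex.conj_conj, Complex.conj_ofReal]
    field_simp [hdne']
    push_cast
    linear_combination (-G₁) * hcG₂
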